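/- There exist an absolute constant a₀ > 0 and a function A : (0, a₀) → (0, ∞) such that the following holds for all integers p ≥ 1 and 1 ≤ m ≤ p and all a ∈ (0, a₀): with t = (a/m)·log(ep/m), one has E[exp(t·G_H²)] ≤ A(a). In particular the expectation is bounded by a finite constant depending only on a and not on p or m. -/

import Mathlib

open Real Finset

noncomputable section

/-- The probability `P(H = i)` for `H ~ Hypergeometric(p, m, m)`. -/
def hyperPMF (p m i : ℕ) : ℝ :=
  ((m.choose i : ℝ) * ((p - m).choose (m - i) : ℝ)) / (p.choose m : ℝ)

/-- `E[exp (t · G_i²)]` where `G_i` is the position of a symmetric (Rademacher)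
random walk after `i` steps. -/
def walkSqMGF (t : ℝ) (i : ℕ) : ℝ :=
  (1 / 2 ^ i) * ∑ s : Fin i → Bool, Real.exp (t * (∑ j, (if s j then (1 : ℝ) else -1)) ^ 2)

/-- `E[exp (t · G_H²)]` where `H ~ Hypergeometric(p, m, m)` and `G` is an independent
symmetric random walk. -/
def hyperWalkMGF (p m : ℕ) (t : ℝ) : ℝ :=
  ∑ i ∈ Finset.range (m + 1), hyperPMF p m i * walkSqMGF t i

/-- `E[exp (λ · H²)]` where `H ~ Hypergeometric(p, m, m)`. -/
def hyperSqMGF (p m : ℕ) (lam : ℝ) : ℝ :=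
  ∑ i ∈ Finset.range (m + 1), hyperPMF p m i * Real.exp (lam * (i : ℝ) ^ 2)

end

open MeasureTheory

/-- helper: iterated ratio bound for binomial coefficients -/
lemma choose_aux (q k : ℕ) : ∀ i : ℕ,
    (q + k).choose k * (q + 1) ^ i ≤ (q + k + i).choose (k + i) * (k + i) ^ i := by
  intro i
  induction i with
  | zero => simp
  | succ i ih =>
    have key : (q + k + i + 1).choose (k + i + 1) * (k + i + 1)
        = (q + k + i).choose (k + i) * (q + k + i + 1) := by
      have := Nat.add_one_mul_choose_eq (q + k + i) (k + i)
      linarith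
    calc (q + k).choose k * (q + 1) ^ (i + 1)
        = ((q + k).choose k * (q + 1) ^ i) * (q + 1) := by ring
      _ ≤ ((q + k + i).choose (k + i) * (k + i) ^ i) * (q + 1) :=
          Nat.mul_le_mul_right _ ih
      _ ≤ ((q + k + i).choose (k + i) * (q + k + i + 1)) * (k + i + 1) ^ i := by
          have h1 : (k + i) ^ i ≤ (k + i + 1) ^ i := Nat.pow_le_pow_left (by omega) i
          have h2 : q + 1 ≤ q + k + i + 1 := by omega
          calc (q + k + i).choose (k + i) * (k + i) ^ i * (q + 1)
              ≤ (q + k + i).choose (k + i) * (k + i + 1) ^ i * (q + k + i + 1) :=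
                Nat.mul_le_mul (Nat.mul_le_mul_left _ h1) h2
            _ = (q + k + i).choose (k + i) * (q + k + i + 1) * (k + i + 1) ^ i := by ring
      _ = ((q + k + i + 1).choose (k + i + 1) * (k + i + 1)) * (k + i + 1) ^ i := by
          rw [key]
      _ = (q + k + i + 1).choose (k + i + 1) * (k + i + 1) ^ (i + 1) := by ring
  
lemma choose_bound {p m i : ℕ} (him : i ≤ m) (hmp : m ≤ p) :
    (p - m).choose (m - i) * (p - m + 1) ^ i ≤ p.choose m * m ^ i := by
  have h := choose_aux (p - m) (m - i) i
  have e1 : p - m + (m - i) + i = p := by omega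
  have e2 : m - i + i = m := by omega
  rw [e1, e2] at h
  calc (p - m).choose (m - i) * (p - m + 1) ^ i
      ≤ (p - m + (m - i)).choose (m - i) * (p - m + 1) ^ i := by
        exact Nat.mul_le_mul_right _ (Nat.choose_le_choose _ (by omega))
    _ ≤ p.choose m * m ^ i := h

lemma hyperPMF_nonneg (p m i : ℕ) : 0 ≤ hyperPMF p m i := by
  unfold hyperPMF; positivity

lemma hyperPMF_sum (p m : ℕ) (hmp : m ≤ p) :
    ∑ i ∈ Finset.range (m + 1), hyperPMF p m i = 1 := by
  have hpos : 0 < p.choose m := Nat.choose_pos hmp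
  have hvdm : ∑ i ∈ Finset.range (m + 1), m.choose i * (p - m).choose (m - i) = p.choose m := by
    have := Nat.add_choose_eq m (p - m) m
    rw [Finset.Nat.sum_antidiagonal_eq_sum_range_succ_mk] at this
    have e : m + (p - m) = p := by omega
    rw [e] at this
    exact this.symm
  unfold hyperPMF
  rw [← Finset.sum_div]
  rw [div_eq_one_iff_eq (by exact_mod_cast hpos.ne')]
  push_cast [← hvdm]
  ring

lemma hyperPMF_le {p m i : ℕ} (him : i ≤ m) (hmp : m ≤ p) :
    hyperPMF p m i ≤ (m.choose i : ℝ) * ((m : ℝ) / ((p : ℝ) - m + 1)) ^ i := by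
  have hpos : (0:ℝ) < p.choose m := by exact_mod_cast Nat.choose_pos hmp
  have hden : (0:ℝ) < (p : ℝ) - m + 1 := by
    have : (m:ℝ) ≤ p := by exact_mod_cast hmp
    linarith
  have hb : ((p - m).choose (m - i) : ℝ) * ((p:ℝ) - m + 1) ^ i ≤ (p.choose m : ℝ) * (m:ℝ) ^ i := by
    have := choose_bound him hmp
    have hcast : ((p:ℝ) - m + 1) = ((p - m + 1 : ℕ) : ℝ) := by
      push_cast [Nat.cast_sub hmp]; ring
    rw [hcast]
    exact_mod_cast this
  have hDpos : (0:ℝ) < ((p:ℝ) - m + 1) ^ i := by positivity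
  have hb' : ((p - m).choose (m - i) : ℝ) ≤ (p.choose m : ℝ) * ((m:ℝ) ^ i / ((p:ℝ) - m + 1) ^ i) := by
    rw [mul_div_assoc'] at *
    rw [le_div_iff₀ hDpos]
    exact hb
  calc hyperPMF p m i
      = (m.choose i : ℝ) * ((p - m).choose (m - i)) / (p.choose m) := rfl
    _ ≤ (m.choose i : ℝ) * ((p.choose m : ℝ) * ((m:ℝ) ^ i / ((p:ℝ) - m + 1) ^ i)) / (p.choose m) := by
        gcongr
    _ = (m.choose i : ℝ) * ((m : ℝ) / ((p : ℝ) - m + 1)) ^ i := by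
        rw [div_pow]
        field_simp

lemma walkSqMGF_nonneg (t : ℝ) (i : ℕ) : 0 ≤ walkSqMGF t i := by
  unfold walkSqMGF
  positivity

lemma walkSqMGF_le_exp {t : ℝ} (ht : 0 ≤ t) (i : ℕ) :
    walkSqMGF t i ≤ Real.exp (t * (i : ℝ) ^ 2) := by
  unfold walkSqMGF
  have hcard : (Fintype.card (Fin i → Bool) : ℝ) = 2 ^ i := by
    simp [Fintype.card_fun]
  have hbd : ∀ s : Fin i → Bool,
      Real.exp (t * (∑ j, (if s j then (1 : ℝ) else -1)) ^ 2) ≤ Real.exp (t * (i : ℝ) ^ 2) := by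
    intro s
    apply Real.exp_le_exp.2
    apply mul_le_mul_of_nonneg_left _ ht
    have habs : |∑ j, (if s j then (1 : ℝ) else -1)| ≤ (i : ℝ) := by
      calc |∑ j : Fin i, (if s j then (1 : ℝ) else -1)| ≤ ∑ j : Fin i, |if s j then (1 : ℝ) else -1| :=
            Finset.abs_sum_le_sum_abs _ _
        _ ≤ ∑ _j : Fin i, (1 : ℝ) := by
            apply Finset.sum_le_sum
            intro j _
            by_cases h : s j <;> simp [h]
        _ = (i : ℝ) := by simp
    calc (∑ j, (if s j then (1 : ℝ) else -1)) ^ 2 = |∑ j, (if s j then (1 : ℝ) else -1)| ^ 2 := (sq_abs _).symm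
      _ ≤ (i : ℝ) ^ 2 := by
          apply pow_le_pow_left₀ (abs_nonneg _) habs
  calc (1 / 2 ^ i) * ∑ s : Fin i → Bool, Real.exp (t * (∑ j, (if s j then (1 : ℝ) else -1)) ^ 2)
      ≤ (1 / 2 ^ i) * ∑ _s : Fin i → Bool, Real.exp (t * (i : ℝ) ^ 2) := by
        apply mul_le_mul_of_nonneg_left _ (by positivity)
        exact Finset.sum_le_sum fun s _ => hbd s
    _ = Real.exp (t * (i : ℝ) ^ 2) := by
        rw [Finset.sum_const, Finset.card_univ, nsmul_eq_mul, hcard]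
        field_simp

lemma integrable_exp_linear_quad (c : ℝ) :
    Integrable (fun z : ℝ => Real.exp (c * z - z ^ 2 / 2)) := by
  have h1 : ∀ z : ℝ, Real.exp (c * z - z ^ 2 / 2)
      = Real.exp (c ^ 2 / 2) * Real.exp (-(1/2 : ℝ) * (z - c) ^ 2) := by
    intro z
    rw [← Real.exp_add]
    ring_nf
  simp only [h1]
  exact ((integrable_exp_neg_mul_sq (by norm_num : (0:ℝ) < 1/2)).comp_sub_right c).const_mul _

lemma integral_exp_linear_quad (c : ℝ) :
    ∫ z : ℝ, Real.exp (c * z - z ^ 2 / 2) = Real.sqrt (2 * π) * Real.exp (c ^ 2 / 2) := by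
  have h1 : ∀ z : ℝ, Real.exp (c * z - z ^ 2 / 2)
      = Real.exp (c ^ 2 / 2) * Real.exp (-(1/2 : ℝ) * (z - c) ^ 2) := by
    intro z
    rw [← Real.exp_add]
    ring_nf
  simp only [h1]
  rw [MeasureTheory.integral_const_mul]
  rw [integral_sub_right_eq_self (fun z : ℝ => Real.exp (-(1/2 : ℝ) * z ^ 2)) c]
  rw [integral_gaussian]
  rw [mul_comm]
  congr 1
  rw [show π / (1/2 : ℝ) = 2 * π by ring]

lemma walkSqMGF_le_two {t : ℝ} (ht : 0 ≤ t) {i : ℕ} (hti : t * i ≤ 1/4) :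
    walkSqMGF t i ≤ 2 := by
  set s : ℝ := Real.sqrt (2 * t) with hs
  have hs2 : s ^ 2 = 2 * t := Real.sq_sqrt (by linarith)
  have hsqrt2pi : (0:ℝ) < Real.sqrt (2 * π) := Real.sqrt_pos.2 (by positivity)
  -- the walk position
  set G : (Fin i → Bool) → ℝ := fun v => ∑ j, (if v j then (1 : ℝ) else -1) with hG
  -- step 1 : walkSqMGF as a Gaussian integral
  have step1 : walkSqMGF t i = (Real.sqrt (2 * π))⁻¹ *
      ∫ z : ℝ, (1 / 2 ^ i) * ∑ v : Fin i → Bool, Real.exp (s * G v * z - z ^ 2 / 2) := by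
    rw [MeasureTheory.integral_const_mul,
      MeasureTheory.integral_finset_sum _ (fun v _ => integrable_exp_linear_quad (s * G v))]
    have : ∀ v : Fin i → Bool,
        ∫ z : ℝ, Real.exp (s * G v * z - z ^ 2 / 2)
          = Real.sqrt (2 * π) * Real.exp (t * (G v) ^ 2) := by
      intro v
      rw [integral_exp_linear_quad (s * G v)]
      congr 1
      rw [mul_pow, hs2]
      ring
    simp only [this]
    rw [← Finset.mul_sum, walkSqMGF]
    field_simp
    rfl
  -- step 2 : pointwise identity and bound for the integrand
  have step2 : ∀ z : ℝ, (1 / 2 ^ i : ℝ) * ∑ v : Fin i → Bool, Real.exp (s * G v * z - z ^ 2 / 2)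
      ≤ Real.exp (-(1/4 : ℝ) * z ^ 2) := by
    intro z
    have hsum : ∑ v : Fin i → Bool, Real.exp (s * G v * z - z ^ 2 / 2)
        = (2 * Real.cosh (s * z)) ^ i * Real.exp (- z ^ 2 / 2) := by
      have e1 : ∀ v : Fin i → Bool, Real.exp (s * G v * z - z ^ 2 / 2)
          = (∏ j : Fin i, Real.exp (s * z * (if v j then (1:ℝ) else -1))) * Real.exp (- z ^ 2 / 2) := by
        intro v
        rw [← Real.exp_sum, ← Real.exp_add]
        congr 1
        rw [hG, ← Finset.mul_sum]
        ring
      simp only [e1]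
      rw [← Finset.sum_mul]
      congr 1
      rw [← Fintype.prod_sum (fun (_ : Fin i) (b : Bool) => Real.exp (s * z * (if b then (1:ℝ) else -1)))]
      have : ∀ _j : Fin i, ∑ b : Bool, Real.exp (s * z * (if b then (1:ℝ) else -1))
          = 2 * Real.cosh (s * z) := by
        intro j
        rw [Real.cosh_eq]
        simp
        ring
      rw [Finset.prod_congr rfl (fun j _ => this j)]
      simp
    rw [hsum]
    have hcosh : (2 * Real.cosh (s * z)) ^ i ≤ 2 ^ i * Real.exp (t * i * z ^ 2) := by
      rw [mul_pow]
      apply mul_le_mul_of_nonneg_left _ (by positivity)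
      calc Real.cosh (s * z) ^ i ≤ (Real.exp ((s * z) ^ 2 / 2)) ^ i := by
            apply pow_le_pow_left₀ (Real.cosh_pos _).le (Real.cosh_le_exp_half_sq _)
        _ = Real.exp (t * i * z ^ 2) := by
            rw [← Real.exp_nat_mul]
            congr 1
            rw [mul_pow, hs2]
            ring
    calc (1 / 2 ^ i : ℝ) * ((2 * Real.cosh (s * z)) ^ i * Real.exp (- z ^ 2 / 2))
        ≤ (1 / 2 ^ i : ℝ) * ((2 ^ i * Real.exp (t * i * z ^ 2)) * Real.exp (- z ^ 2 / 2)) := by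
          apply mul_le_mul_of_nonneg_left _ (by positivity)
          exact mul_le_mul_of_nonneg_right hcosh (Real.exp_nonneg _)
      _ = Real.exp (t * i * z ^ 2 + - z ^ 2 / 2) := by
          rw [Real.exp_add]
          field_simp
      _ ≤ Real.exp (-(1/4 : ℝ) * z ^ 2) := by
          apply Real.exp_le_exp.2
          nlinarith [sq_nonneg z, mul_le_mul_of_nonneg_right hti (sq_nonneg z)]
  -- step 3 : integrate
  have step3 : (∫ z : ℝ, (1 / 2 ^ i : ℝ) * ∑ v : Fin i → Bool, Real.exp (s * G v * z - z ^ 2 / 2))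
      ≤ ∫ z : ℝ, Real.exp (-(1/4 : ℝ) * z ^ 2) := by
    apply MeasureTheory.integral_mono_of_nonneg
    · filter_upwards with z
      positivity
    · exact integrable_exp_neg_mul_sq (by norm_num)
    · filter_upwards with z
      exact step2 z
  rw [step1]
  calc (Real.sqrt (2 * π))⁻¹ *
      (∫ z : ℝ, (1 / 2 ^ i : ℝ) * ∑ v : Fin i → Bool, Real.exp (s * G v * z - z ^ 2 / 2))
      ≤ (Real.sqrt (2 * π))⁻¹ * ∫ z : ℝ, Real.exp (-(1/4 : ℝ) * z ^ 2) := by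
        apply mul_le_mul_of_nonneg_left step3 (by positivity)
    _ = (Real.sqrt (2 * π))⁻¹ * Real.sqrt (π / (1/4)) := by rw [integral_gaussian]
    _ = Real.sqrt 2 := by
        rw [show π / (1/4 : ℝ) = 2 * (2 * π) by ring, Real.sqrt_mul (by norm_num)]
        field_simp
        rw [Real.sqrt_mul (by positivity), Real.sqrt_sq (by norm_num), Real.sq_sqrt (by norm_num)]
    _ ≤ 2 := by
      nlinarith [Real.sq_sqrt (by norm_num : (0:ℝ) ≤ 2), Real.sqrt_nonneg 2]

lemma choose_le_two_pow_real (m i : ℕ) (him : i ≤ m) : (m.choose i : ℝ) ≤ 2 ^ m := by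
  have h : m.choose i ≤ 2 ^ m := by
    calc m.choose i ≤ ∑ j ∈ Finset.range (m + 1), m.choose j :=
          Finset.single_le_sum (fun j _ => Nat.zero_le _) (Finset.mem_range.2 (by omega))
      _ = 2 ^ m := Nat.sum_range_choose m
  exact_mod_cast h


set_option maxHeartbeats 1000000 in
/-- uniform bound on the MGF of the squared random walk stopped at an
independent hypergeometric time. -/
theorem hyperWalkMGF_uniform_bound :
    ∃ a₀ : ℝ, 0 < a₀ ∧
      ∃ A : ℝ → ℝ,
        (∀ a, 0 < a → a < a₀ → 0 < A a) ∧
        ∀ (p m : ℕ), 1 ≤ m → m ≤ p →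
          ∀ a : ℝ, 0 < a → a < a₀ →
            ∀ t : ℝ, t = (a / m) * Real.log (Real.exp 1 * p / m) →
              hyperWalkMGF p m t ≤ A a := by
  refine ⟨1/100, by norm_num, fun _ => 4, fun a _ _ => by norm_num, ?_⟩
  intro p m hm1 hmp a ha ha0 t ht
  have hm0 : (0:ℝ) < m := by exact_mod_cast hm1
  have hp1 : 1 ≤ p := le_trans hm1 hmp
  have hp0 : (0:ℝ) < p := by exact_mod_cast hp1
  have hmpR : (m:ℝ) ≤ p := by exact_mod_cast hmp
  set L : ℝ := Real.log (Real.exp 1 * p / m) with hLdef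
  have hbase : Real.exp 1 ≤ Real.exp 1 * p / m := by
    rw [le_div_iff₀ hm0]
    have := Real.exp_pos 1
    nlinarith
  have hbase0 : (0:ℝ) < Real.exp 1 * p / m := lt_of_lt_of_le (Real.exp_pos 1) hbase
  have hL1 : 1 ≤ L := by
    rw [hLdef, Real.le_log_iff_exp_le hbase0]
    exact hbase
  have hexpL : Real.exp L = Real.exp 1 * p / m := Real.exp_log hbase0
  have ht0 : 0 ≤ t := by
    rw [ht]
    have : (0:ℝ) ≤ a / m := div_nonneg ha.le hm0.le
    nlinarith
  have htm : t * m = a * L := by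
    rw [ht]
    field_simp
  -- termwise bound
  have key : ∀ i ∈ Finset.range (m+1),
      hyperPMF p m i * walkSqMGF t i ≤ 2 * hyperPMF p m i + (1/2 : ℝ)^i := by
    intro i hi
    have him : i ≤ m := by
      have := Finset.mem_range.1 hi; omega
    have himR : (i:ℝ) ≤ m := by exact_mod_cast him
    by_cases hcase : t * i ≤ 1/4
    · have hW := walkSqMGF_le_two ht0 hcase
      have hP := hyperPMF_nonneg p m i
      have hpow : (0:ℝ) ≤ (1/2:ℝ)^i := by positivity
      nlinarith [mul_le_mul_of_nonneg_left hW hP]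
    · push_neg at hcase
      have htiaL : t * i ≤ a * L := by
        rw [← htm]
        exact mul_le_mul_of_nonneg_left himR ht0
      have haL : 1/4 < a * L := lt_of_lt_of_le hcase htiaL
      have hL25 : 25 < L := by nlinarith
      have hm4aLi : (m:ℝ) < 4 * (a * L) * i := by
        rw [ht] at hcase
        have h4 : (a / m * L) * i > 1/4 := hcase
        nlinarith
      -- m ≤ p/2
      have hELm : Real.exp L * m = Real.exp 1 * p := by
        rw [hexpL]; field_simp
      have hexp1 : (2:ℝ) < Real.exp 1 := by
        have := Real.exp_one_gt_d9; linarith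
      have hEL2e : 2 * Real.exp 1 ≤ Real.exp L := by
        have h2 : Real.exp 2 ≤ Real.exp L := Real.exp_le_exp.2 (by linarith)
        have : Real.exp 2 = Real.exp 1 * Real.exp 1 := by
          rw [← Real.exp_add]; norm_num
        nlinarith [Real.exp_pos 1]
      have hmp2 : 2 * (m:ℝ) ≤ p := by
        have h1 : 2 * Real.exp 1 * m ≤ Real.exp L * m :=
          mul_le_mul_of_nonneg_right hEL2e hm0.le
        rw [hELm] at h1
        have h2 : Real.exp 1 * (2*(m:ℝ)) ≤ Real.exp 1 * p := by linarith
        have := le_of_mul_le_mul_left h2 (Real.exp_pos 1)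
        linarith
      have hden : (0:ℝ) < (p:ℝ) - m + 1 := by linarith
      -- P bound
      have hfrac : (m:ℝ) / ((p:ℝ) - m + 1) ≤ 2 * m / p := by
        rw [div_le_div_iff₀ hden hp0]
        nlinarith
      have hfrac0 : (0:ℝ) ≤ (m:ℝ) / ((p:ℝ) - m + 1) := by positivity
      have hP : hyperPMF p m i ≤ 2^m * (2 * (m:ℝ) / p)^i := by
        calc hyperPMF p m i ≤ (m.choose i : ℝ) * ((m : ℝ) / ((p : ℝ) - m + 1)) ^ i :=
              hyperPMF_le him hmp
          _ ≤ 2^m * (2 * (m:ℝ) / p)^i := by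
              apply mul_le_mul (choose_le_two_pow_real m i him)
                (pow_le_pow_left₀ hfrac0 hfrac i) (by positivity) (by positivity)
      -- W bound
      have hW : walkSqMGF t i ≤ Real.exp (a * L * i) := by
        calc walkSqMGF t i ≤ Real.exp (t * (i:ℝ)^2) := walkSqMGF_le_exp ht0 i
          _ ≤ Real.exp (a * L * i) := by
              apply Real.exp_le_exp.2
              have : t * (i:ℝ)^2 = (t * i) * i := by ring
              rw [this]
              exact mul_le_mul_of_nonneg_right htiaL (Nat.cast_nonneg i)
      -- rewrite pieces as exponentials
      have hlog2 : Real.log 2 < 0.6931471808 := Real.log_two_lt_d9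
      have hlog2pos : (0:ℝ) < Real.log 2 := Real.log_pos (by norm_num)
      have h2m : (2:ℝ)^m ≤ Real.exp (4 * (a * L) * i * Real.log 2) := by
        have : (2:ℝ)^m = Real.exp (m * Real.log 2) := by
          rw [Real.exp_nat_mul, Real.exp_log (by norm_num : (0:ℝ) < 2)]
        rw [this]
        apply Real.exp_le_exp.2
        nlinarith
      have h2mp : 2 * (m:ℝ) / p = Real.exp (Real.log 2 + 1 - L) := by
        rw [Real.exp_sub, Real.exp_add, Real.exp_log (by norm_num : (0:ℝ) < 2), hexpL]
        field_simp
      -- combine into X^i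
      set c : ℝ := Real.log 2 + 1 + (4 * Real.log 2 + 1) * (a * L) - L with hc
      have hcombine : hyperPMF p m i * walkSqMGF t i ≤ (Real.exp c)^i := by
        have hterm : hyperPMF p m i * walkSqMGF t i
            ≤ (2^m * (2 * (m:ℝ) / p)^i) * Real.exp (a * L * i) :=
          mul_le_mul hP hW (walkSqMGF_nonneg t i) (by positivity)
        refine le_trans hterm ?_
        rw [h2mp]
        calc (2:ℝ)^m * (Real.exp (Real.log 2 + 1 - L))^i * Real.exp (a * L * i)
            ≤ Real.exp (4 * (a * L) * i * Real.log 2) * (Real.exp (Real.log 2 + 1 - L))^i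
                * Real.exp (a * L * i) := by
              apply mul_le_mul_of_nonneg_right _ (Real.exp_nonneg _)
              apply mul_le_mul_of_nonneg_right h2m (pow_nonneg (Real.exp_nonneg _) i)
          _ = (Real.exp c)^i := by
              rw [← Real.exp_nat_mul, ← Real.exp_nat_mul, ← Real.exp_add, ← Real.exp_add]
              congr 1
              rw [hc]
              ring
      have hXhalf : Real.exp c ≤ 1/2 := by
        have hcneg : c ≤ -1 := by
          rw [hc]
          nlinarith
        calc Real.exp c ≤ Real.exp (-1) := Real.exp_le_exp.2 hcneg
          _ ≤ 1/2 := by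
              rw [Real.exp_neg]
              rw [inv_le_comm₀ (Real.exp_pos 1) (by norm_num)]
              norm_num
              linarith [Real.exp_one_gt_d9]
      have : hyperPMF p m i * walkSqMGF t i ≤ (1/2:ℝ)^i :=
        le_trans hcombine (pow_le_pow_left₀ (Real.exp_nonneg c) hXhalf i)
      have hPn := hyperPMF_nonneg p m i
      linarith
  -- sum everything
  have hsum1 := hyperPMF_sum p m hmp
  have hgeom : ∑ i ∈ Finset.range (m+1), (1/2:ℝ)^i ≤ 2 := by
    have h := geom_sum_eq (by norm_num : (1/2:ℝ) ≠ 1) (m+1)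
    rw [h]
    have hpow : (0:ℝ) ≤ (1/2:ℝ)^(m+1) := by positivity
    rw [show ((1:ℝ)/2 - 1) = -(1/2) by norm_num]
    rw [div_le_iff_of_neg (by norm_num : (-(1/2):ℝ) < 0)]
    linarith
  calc hyperWalkMGF p m t
      = ∑ i ∈ Finset.range (m+1), hyperPMF p m i * walkSqMGF t i := rfl
    _ ≤ ∑ i ∈ Finset.range (m+1), (2 * hyperPMF p m i + (1/2:ℝ)^i) := Finset.sum_le_sum key
    _ = 2 * (∑ i ∈ Finset.range (m+1), hyperPMF p m i) + ∑ i ∈ Finset.range (m+1), (1/2:ℝ)^i := by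
        rw [Finset.sum_add_distrib, Finset.mul_sum]
    _ ≤ 2 * 1 + 2 := by
        rw [hsum1]
        linarith
    _ = 4 := by norm_num
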